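/- Let ξ₁ > 0 and 1 < ξ₂₁ < ξ₂₂, and let F₁, F₂ be the Beta(ξ₁,ξ₂₁) and Beta(ξ₁,ξ₂₂) CDFs. Then the ratio F₂^{-1}(ω)/F₁^{-1}(ω) is not constant on (0,1); in fact there exist 0 < ω̲ < ω̄ < 1 on which it is strictly increasing. -/
import Mathlib


open MeasureTheory Set Real

/-- The Beta(ξ₁, ξ₂) cumulative distribution function on (0,1). -/
noncomputable def betaCDF (ξ₁ ξ₂ : ℝ) (q : ℝ) : ℝ :=
  ∫ γ in Set.Ioo (0:ℝ) q,
    γ ^ (ξ₁ - 1) * (1 - γ) ^ (ξ₂ - 1) / (Real.Gamma ξ₁ * Real.Gamma ξ₂ / Real.Gamma (ξ₁ + ξ₂))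

lemma betaIntegral_real {a b : ℝ} (ha : 0 < a) (hb : 0 < b) :
    ∫ x in (0:ℝ)..1, x ^ (a-1) * (1-x) ^ (b-1) =
      Real.Gamma a * Real.Gamma b / Real.Gamma (a+b) := by
  have key := Complex.Gamma_mul_Gamma_eq_betaIntegral (s := (a:ℂ)) (t := (b:ℂ))
    (by simpa using ha) (by simpa using hb)
  have hβ : Complex.betaIntegral a b = ((∫ x in (0:ℝ)..1, x ^ (a-1) * (1-x) ^ (b-1) : ℝ) : ℂ) := by
    rw [Complex.betaIntegral, ← intervalIntegral.integral_ofReal]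
    refine intervalIntegral.integral_congr fun x hx => ?_
    rw [uIcc_of_le zero_le_one] at hx
    push_cast
    rw [Complex.ofReal_cpow hx.1, Complex.ofReal_cpow (by linarith [hx.2])]
    push_cast; ring
  rw [hβ, ← Complex.ofReal_add, Complex.Gamma_ofReal, Complex.Gamma_ofReal,
    Complex.Gamma_ofReal, ← Complex.ofReal_mul, ← Complex.ofReal_mul] at key
  have := Complex.ofReal_injective key
  have hne : Real.Gamma (a+b) ≠ 0 := (Real.Gamma_pos_of_pos (by linarith)).ne'
  field_simp
  linarith [this]

noncomputable def dens (a b γ : ℝ) : ℝ :=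
  γ ^ (a - 1) * (1 - γ) ^ (b - 1) / (Real.Gamma a * Real.Gamma b / Real.Gamma (a + b))

lemma B_pos {a b : ℝ} (ha : 0 < a) (hb : 0 < b) :
    0 < Real.Gamma a * Real.Gamma b / Real.Gamma (a + b) := by
  have := Real.Gamma_pos_of_pos ha
  have := Real.Gamma_pos_of_pos hb
  have := Real.Gamma_pos_of_pos (show 0 < a + b by linarith)
  positivity

lemma dens_pos {a b γ : ℝ} (ha : 0 < a) (hb : 0 < b) (hγ : γ ∈ Set.Ioo (0:ℝ) 1) :
    0 < dens a b γ := by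
  have h1 : (0:ℝ) < γ := hγ.1
  have h2 : (0:ℝ) < 1 - γ := by linarith [hγ.2]
  have := B_pos ha hb
  unfold dens
  positivity

lemma dens_intervalIntegrable {a b : ℝ} (ha : 0 < a) (hb : 1 ≤ b) {q : ℝ}
    (hq0 : 0 ≤ q) (hq1 : q ≤ 1) :
    IntervalIntegrable (dens a b) volume 0 q := by
  rw [intervalIntegrable_iff_integrableOn_Ioc_of_le hq0]
  have hB := B_pos ha (by linarith : (0:ℝ) < b)
  have hmeas : AEStronglyMeasurable (dens a b) (volume.restrict (Set.Ioc 0 q)) := by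
    apply Measurable.aestronglyMeasurable
    unfold dens
    fun_prop
  have hint : IntegrableOn (fun γ : ℝ => γ ^ (a-1) / (Real.Gamma a * Real.Gamma b / Real.Gamma (a + b))) (Set.Ioc 0 q) volume := by
    have h := (intervalIntegral.intervalIntegrable_rpow' (a := 0) (b := q) (r := a - 1) (by linarith)).div_const
      (Real.Gamma a * Real.Gamma b / Real.Gamma (a + b))
    exact (intervalIntegrable_iff_integrableOn_Ioc_of_le hq0).mp h
  refine hint.integrable.mono hmeas ?_
  filter_upwards [ae_restrict_mem measurableSet_Ioc] with γ hγ
  have h1 : (0:ℝ) < γ := hγ.1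
  have h2 : (0:ℝ) ≤ 1 - γ := by linarith [hγ.2.trans hq1]
  have hb1 : (1 - γ) ^ (b - 1) ≤ 1 := Real.rpow_le_one h2 (by linarith) (by linarith)
  have hγa : (0:ℝ) < γ ^ (a-1) := Real.rpow_pos_of_pos h1 _
  rw [Real.norm_eq_abs, Real.norm_eq_abs, abs_of_nonneg, abs_of_nonneg]
  · unfold dens
    rw [div_le_div_iff_of_pos_right hB]
    nlinarith [Real.rpow_nonneg h2 (b-1)]
  · positivity
  · unfold dens; positivity

lemma betaCDF_eq {a b q : ℝ} (hq0 : 0 ≤ q) :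
    betaCDF a b q = ∫ γ in (0:ℝ)..q, dens a b γ := by
  rw [intervalIntegral.integral_of_le hq0, MeasureTheory.integral_Ioc_eq_integral_Ioo]
  rfl

lemma betaCDF_sub {a b : ℝ} (ha : 0 < a) (hb : 1 ≤ b) {q q' : ℝ}
    (h0 : 0 ≤ q) (hqq : q ≤ q') (h1 : q' ≤ 1) :
    betaCDF a b q' - betaCDF a b q = ∫ γ in q..q', dens a b γ := by
  rw [betaCDF_eq h0, betaCDF_eq (h0.trans hqq),
    ← intervalIntegral.integral_add_adjacent_intervals
      (dens_intervalIntegrable ha hb h0 (hqq.trans h1))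
      ((dens_intervalIntegrable ha hb zero_le_one le_rfl (q := 1)).mono_set (by
        rw [Set.uIcc_of_le hqq, Set.uIcc_of_le zero_le_one]
        exact Set.Icc_subset_Icc h0 h1))]
  ring

lemma betaCDF_lt {a b : ℝ} (ha : 0 < a) (hb : 1 ≤ b) {q q' : ℝ}
    (h0 : 0 ≤ q) (hqq : q < q') (h1 : q' ≤ 1) :
    betaCDF a b q < betaCDF a b q' := by
  have h := betaCDF_sub ha hb h0 hqq.le h1
  have hpos : 0 < ∫ γ in q..q', dens a b γ := by
    apply intervalIntegral.intervalIntegral_pos_of_pos_on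
    · refine (dens_intervalIntegrable ha hb zero_le_one le_rfl (q := 1)).mono_set ?_
      rw [Set.uIcc_of_le hqq.le, Set.uIcc_of_le zero_le_one]
      exact Set.Icc_subset_Icc h0 h1
    · intro x hx
      exact dens_pos ha (by linarith) ⟨lt_of_le_of_lt h0 hx.1, lt_of_lt_of_le hx.2 h1⟩
    · exact hqq
  linarith

lemma betaCDF_zero (a b : ℝ) : betaCDF a b 0 = 0 := by
  unfold betaCDF; simp

lemma betaCDF_one {a b : ℝ} (ha : 0 < a) (hb : 1 ≤ b) : betaCDF a b 1 = 1 := by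
  rw [betaCDF_eq zero_le_one]
  have hB := B_pos ha (by linarith : (0:ℝ) < b)
  have : ∫ γ in (0:ℝ)..1, dens a b γ
      = (∫ x in (0:ℝ)..1, x ^ (a-1) * (1-x) ^ (b-1)) / (Real.Gamma a * Real.Gamma b / Real.Gamma (a+b)) := by
    rw [← intervalIntegral.integral_div]; rfl
  rw [this, betaIntegral_real ha (by linarith), div_self hB.ne']

lemma dens_continuousAt {a b γ : ℝ} (hγ : γ ∈ Set.Ioo (0:ℝ) 1) : ContinuousAt (dens a b) γ := by
  have h1 : γ ≠ 0 := ne_of_gt hγ.1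
  have h2 : (1:ℝ) - γ ≠ 0 := by have := hγ.2; intro h; linarith [sub_eq_zero.mp h]
  apply ContinuousAt.div_const
  exact ((Real.continuousAt_rpow_const γ (a-1) (Or.inl h1)).mul
    (((continuous_const.sub continuous_id).continuousAt).rpow_const (Or.inl h2)))

lemma hasStrictDerivAt_betaCDF {a b q : ℝ} (ha : 0 < a) (hb : 1 ≤ b) (hq : q ∈ Set.Ioo (0:ℝ) 1) :
    HasStrictDerivAt (betaCDF a b) (dens a b q) q := by
  have hFTC : HasStrictDerivAt (fun u => ∫ γ in (0:ℝ)..u, dens a b γ) (dens a b q) q := by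
    apply intervalIntegral.integral_hasStrictDerivAt_right
      (dens_intervalIntegrable ha hb hq.1.le hq.2.le)
    · exact ContinuousOn.stronglyMeasurableAtFilter isOpen_Ioo
        (fun x hx => (dens_continuousAt hx).continuousWithinAt) _ hq
    · exact dens_continuousAt hq
  apply hFTC.congr_of_eventuallyEq
  filter_upwards [eventually_gt_nhds hq.1] with u hu
  exact (betaCDF_eq hu.le).symm

section
variable {a b₁ b₂ : ℝ} (ha : 0 < a) (hb₁ : 1 ≤ b₁) (hbb : b₁ < b₂)

/-- notation for the Beta constant -/
noncomputable def Bc (a b : ℝ) : ℝ := Real.Gamma a * Real.Gamma b / Real.Gamma (a + b)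

include ha hb₁ hbb in
lemma Bc_lt : Bc a b₂ < Bc a b₁ := by
  have hb₁0 : (0:ℝ) < b₁ := by linarith
  have hb₂0 : (0:ℝ) < b₂ := by linarith
  have e₁ := betaIntegral_real ha hb₁0
  have e₂ := betaIntegral_real ha hb₂0
  have hii : ∀ b : ℝ, 1 ≤ b → IntervalIntegrable
      (fun x : ℝ => x ^ (a-1) * (1-x) ^ (b-1)) volume 0 1 := by
    intro b hb
    have h := (dens_intervalIntegrable ha hb zero_le_one le_rfl).mul_const
      (Real.Gamma a * Real.Gamma b / Real.Gamma (a + b))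
    have hB := B_pos ha (by linarith : (0:ℝ) < b)
    have heq : (fun x : ℝ => dens a b x * (Real.Gamma a * Real.Gamma b / Real.Gamma (a + b)))
        = fun x : ℝ => x ^ (a-1) * (1-x) ^ (b-1) :=
      funext fun x => div_mul_cancel₀ _ hB.ne'
    rwa [heq] at h
  have hpos : 0 < ∫ x in (0:ℝ)..1,
      (x ^ (a-1) * (1-x) ^ (b₁-1) - x ^ (a-1) * (1-x) ^ (b₂-1)) := by
    apply intervalIntegral.intervalIntegral_pos_of_pos_on
      ((hii b₁ hb₁).sub (hii b₂ (by linarith)))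
    · intro x hx
      have h1 : (0:ℝ) < x := hx.1
      have h2 : (0:ℝ) < 1 - x := by linarith [hx.2]
      have h3 : (1:ℝ) - x < 1 := by linarith
      have h4 := Real.rpow_lt_rpow_of_exponent_gt h2 h3 (by linarith : b₁ - 1 < b₂ - 1)
      have h5 : (0:ℝ) < x ^ (a-1) := Real.rpow_pos_of_pos h1 _
      nlinarith
    · exact one_pos
  rw [intervalIntegral.integral_sub (hii b₁ hb₁) (hii b₂ (by linarith)), e₁, e₂] at hpos
  unfold Bc
  linarith

include ha hb₁ hbb in
lemma c_mem : (Bc a b₂ / Bc a b₁) ^ (b₂ - b₁)⁻¹ ∈ Set.Ioo (0:ℝ) 1 := by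
  have hB₁ := B_pos ha (by linarith : (0:ℝ) < b₁)
  have hB₂ := B_pos ha (by linarith : (0:ℝ) < b₂)
  have hlt := Bc_lt ha hb₁ hbb
  constructor
  · apply Real.rpow_pos_of_pos
    unfold Bc at *
    positivity
  · apply Real.rpow_lt_one (by unfold Bc at *; positivity)
    · rw [div_lt_one (by unfold Bc at *; positivity)]
      exact hlt
    · simp [sub_pos.mpr hbb, inv_pos]

-- sign lemmas
include ha hb₁ hbb in
lemma dens_sign {γ : ℝ} (hγ : γ ∈ Set.Ioo (0:ℝ) 1) :
    ((1 - γ < (Bc a b₂ / Bc a b₁) ^ (b₂ - b₁)⁻¹ → dens a b₂ γ < dens a b₁ γ) ∧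
     ((Bc a b₂ / Bc a b₁) ^ (b₂ - b₁)⁻¹ < 1 - γ → dens a b₁ γ < dens a b₂ γ)) := by
  have hB₁ := B_pos ha (by linarith : (0:ℝ) < b₁)
  have hB₂ := B_pos ha (by linarith : (0:ℝ) < b₂)
  have hδ : (0:ℝ) < b₂ - b₁ := by linarith
  have h2 : (0:ℝ) < 1 - γ := by linarith [hγ.2]
  have hxa : (0:ℝ) < γ ^ (a-1) := Real.rpow_pos_of_pos hγ.1 _
  have hratio : ((Bc a b₂ / Bc a b₁) ^ (b₂ - b₁)⁻¹) ^ (b₂ - b₁) = Bc a b₂ / Bc a b₁ := by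
    apply Real.rpow_inv_rpow (by unfold Bc at *; positivity) hδ.ne'
  have hsplit : (1 - γ) ^ (b₂ - 1) = (1 - γ) ^ (b₁ - 1) * (1 - γ) ^ (b₂ - b₁) := by
    rw [← Real.rpow_add h2]; ring_nf
  have hpow1 : (0:ℝ) < (1-γ) ^ (b₁ - 1) := Real.rpow_pos_of_pos h2 _
  have hdens : ∀ b : ℝ, dens a b γ = γ ^ (a-1) * (1-γ) ^ (b-1) / Bc a b := fun b => rfl
  have hB₁' : (0:ℝ) < Bc a b₁ := hB₁
  have hB₂' : (0:ℝ) < Bc a b₂ := hB₂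
  constructor
  · intro hlt
    have h6 := Real.rpow_lt_rpow (by linarith) hlt hδ
    rw [hratio] at h6
    rw [lt_div_iff₀ hB₁'] at h6
    rw [hdens, hdens, div_lt_div_iff₀ hB₂' hB₁', hsplit]
    nlinarith [mul_pos hxa hpow1]
  · intro hlt
    have h6 := Real.rpow_lt_rpow (Real.rpow_nonneg (by unfold Bc at *; positivity) _) hlt hδ
    rw [hratio] at h6
    rw [div_lt_iff₀ hB₁'] at h6
    rw [hdens, hdens, div_lt_div_iff₀ hB₁' hB₂', hsplit]
    nlinarith [mul_pos hxa hpow1]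

include ha hb₁ hbb in
lemma betaCDF_dominance {q : ℝ} (hq : q ∈ Set.Ioo (0:ℝ) 1) :
    betaCDF a b₁ q < betaCDF a b₂ q := by
  have hb₂ : (1:ℝ) ≤ b₂ := by linarith
  set c := (Bc a b₂ / Bc a b₁) ^ (b₂ - b₁)⁻¹ with hc
  have hcm := c_mem ha hb₁ hbb
  have hii₁ : IntervalIntegrable (dens a b₁) volume 0 q :=
    dens_intervalIntegrable ha hb₁ hq.1.le hq.2.le
  have hii₂ : IntervalIntegrable (dens a b₂) volume 0 q :=
    dens_intervalIntegrable ha hb₂ hq.1.le hq.2.le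
  rcases le_or_gt q (1 - c) with hcase | hcase
  · -- q ≤ 1 - c : compare from 0
    have key : 0 < ∫ γ in (0:ℝ)..q, (dens a b₂ γ - dens a b₁ γ) := by
      apply intervalIntegral.intervalIntegral_pos_of_pos_on (hii₂.sub hii₁) _ hq.1
      intro x hx
      have hxm : x ∈ Set.Ioo (0:ℝ) 1 := ⟨hx.1, hx.2.trans hq.2⟩
      have := (dens_sign ha hb₁ hbb hxm).2 (by rw [← hc]; linarith [hx.2])
      linarith
    rw [intervalIntegral.integral_sub hii₂ hii₁] at key
    rw [betaCDF_eq hq.1.le, betaCDF_eq hq.1.le]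
    linarith
  · -- 1 - c < q : compare from 1
    have hsub₁ := betaCDF_sub ha hb₁ hq.1.le hq.2.le le_rfl
    have hsub₂ := betaCDF_sub ha hb₂ hq.1.le hq.2.le le_rfl
    rw [betaCDF_one ha hb₁] at hsub₁
    rw [betaCDF_one ha hb₂] at hsub₂
    have hjj₁ : IntervalIntegrable (dens a b₁) volume q 1 :=
      (dens_intervalIntegrable ha hb₁ zero_le_one le_rfl (q := 1)).mono_set
        (by rw [Set.uIcc_of_le hq.2.le, Set.uIcc_of_le zero_le_one]
            exact Set.Icc_subset_Icc hq.1.le le_rfl)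
    have hjj₂ : IntervalIntegrable (dens a b₂) volume q 1 :=
      (dens_intervalIntegrable ha hb₂ zero_le_one le_rfl (q := 1)).mono_set
        (by rw [Set.uIcc_of_le hq.2.le, Set.uIcc_of_le zero_le_one]
            exact Set.Icc_subset_Icc hq.1.le le_rfl)
    have key : 0 < ∫ γ in q..(1:ℝ), (dens a b₁ γ - dens a b₂ γ) := by
      apply intervalIntegral.intervalIntegral_pos_of_pos_on (hjj₁.sub hjj₂) _ hq.2
      intro x hx
      have hxm : x ∈ Set.Ioo (0:ℝ) 1 := ⟨hq.1.trans hx.1, hx.2⟩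
      have := (dens_sign ha hb₁ hbb hxm).1 (by rw [← hc]; linarith [hx.1])
      linarith
    rw [intervalIntegral.integral_sub hjj₁ hjj₂] at key
    linarith
end

section
variable {a b : ℝ} {G : ℝ → ℝ}

lemma betaCDF_le (ha : 0 < a) (hb : 1 ≤ b) {q q' : ℝ} (h0 : 0 ≤ q) (hqq : q ≤ q') (h1 : q' ≤ 1) :
    betaCDF a b q ≤ betaCDF a b q' := by
  rcases eq_or_lt_of_le hqq with h | h
  · rw [h]
  · exact (betaCDF_lt ha hb h0 h h1).le

variable (hG : ∀ ω ∈ Set.Ioo (0:ℝ) 1, G ω ∈ Set.Ioo (0:ℝ) 1 ∧ betaCDF a b (G ω) = ω)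
include hG

lemma G_gt_of (ha : 0 < a) (hb : 1 ≤ b) {ω q : ℝ} (hω : ω ∈ Set.Ioo (0:ℝ) 1)
    (hq0 : 0 ≤ q) (hq1 : q ≤ 1) (h : betaCDF a b q < ω) : q < G ω := by
  obtain ⟨hx, hFG⟩ := hG ω hω
  by_contra hcon
  push_neg at hcon
  have := betaCDF_le ha hb hx.1.le hcon hq1
  rw [hFG] at this; linarith

lemma G_lt_of (ha : 0 < a) (hb : 1 ≤ b) {ω q : ℝ} (hω : ω ∈ Set.Ioo (0:ℝ) 1)
    (hq0 : 0 ≤ q) (hq1 : q ≤ 1) (h : ω < betaCDF a b q) : G ω < q := by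
  obtain ⟨hx, hFG⟩ := hG ω hω
  by_contra hcon
  push_neg at hcon
  have := betaCDF_le ha hb hq0 hcon hx.2.le
  rw [hFG] at this; linarith

lemma G_continuousAt (ha : 0 < a) (hb : 1 ≤ b) {ω : ℝ} (hω : ω ∈ Set.Ioo (0:ℝ) 1) :
    ContinuousAt G ω := by
  obtain ⟨hx, hFG⟩ := hG ω hω
  rw [Metric.continuousAt_iff]
  intro ε hε
  set x := G ω with hxdef
  set ε' := min (ε/2) (min (x/2) ((1-x)/2)) with hε'
  have hε'pos : 0 < ε' := by
    apply lt_min (by linarith)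
    exact lt_min (by linarith [hx.1]) (by linarith [hx.2])
  have hε'ε : ε' ≤ ε/2 := min_le_left _ _
  have hlo : 0 < x - ε' := by
    have : ε' ≤ x/2 := (min_le_right _ _).trans (min_le_left _ _)
    linarith [hx.1]
  have hhi : x + ε' < 1 := by
    have : ε' ≤ (1-x)/2 := (min_le_right _ _).trans (min_le_right _ _)
    linarith [hx.2]
  have hF1 : betaCDF a b (x - ε') < ω := by
    have := betaCDF_lt ha hb hlo.le (by linarith : x - ε' < x) hx.2.le
    rwa [hFG] at this
  have hF2 : ω < betaCDF a b (x + ε') := by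
    have := betaCDF_lt ha hb hx.1.le (by linarith : x < x + ε') hhi.le
    rwa [hFG] at this
  have hF1pos : 0 < betaCDF a b (x - ε') := by
    have := betaCDF_lt ha hb le_rfl hlo (by linarith)
    rwa [betaCDF_zero] at this
  have hF2lt1 : betaCDF a b (x + ε') < 1 := by
    have := betaCDF_lt ha hb (by linarith : (0:ℝ) ≤ x + ε') hhi le_rfl
    rwa [betaCDF_one ha hb] at this
  refine ⟨min (ω - betaCDF a b (x - ε')) (betaCDF a b (x + ε') - ω),
    lt_min (by linarith) (by linarith), ?_⟩
  intro ω' hd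
  rw [Real.dist_eq, abs_lt] at hd
  have hm1 : min (ω - betaCDF a b (x - ε')) (betaCDF a b (x + ε') - ω)
      ≤ ω - betaCDF a b (x - ε') := min_le_left _ _
  have hm2 : min (ω - betaCDF a b (x - ε')) (betaCDF a b (x + ε') - ω)
      ≤ betaCDF a b (x + ε') - ω := min_le_right _ _
  have hω'1 : betaCDF a b (x - ε') < ω' := by linarith [hd.1]
  have hω'2 : ω' < betaCDF a b (x + ε') := by linarith [hd.2]
  have hω'mem : ω' ∈ Set.Ioo (0:ℝ) 1 := ⟨by linarith, by linarith⟩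
  have hgt := G_gt_of hG ha hb hω'mem hlo.le (by linarith) hω'1
  have hlt := G_lt_of hG ha hb hω'mem (by linarith : (0:ℝ) ≤ x + ε') hhi.le hω'2
  rw [Real.dist_eq, abs_lt]
  constructor <;> [linarith; linarith]

lemma G_hasStrictDerivAt (ha : 0 < a) (hb : 1 ≤ b) {ω : ℝ} (hω : ω ∈ Set.Ioo (0:ℝ) 1) :
    HasStrictDerivAt G (dens a b (G ω))⁻¹ ω := by
  obtain ⟨hx, hFG⟩ := hG ω hω
  apply HasStrictDerivAt.of_local_left_inverse (G_continuousAt hG ha hb hω)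
    (hasStrictDerivAt_betaCDF ha hb hx)
    (dens_pos ha (by linarith) hx).ne'
  filter_upwards [Ioo_mem_nhds hω.1 hω.2] with u hu
  exact (hG u hu).2
end


theorem stmt_6 (ξ₁ ξ₂₁ ξ₂₂ : ℝ) (hξ₁ : 0 < ξ₁) (h1 : 1 < ξ₂₁) (h2 : ξ₂₁ < ξ₂₂)
    (G₁ G₂ : ℝ → ℝ)
    (hG₁ : ∀ ω ∈ Set.Ioo (0:ℝ) 1, G₁ ω ∈ Set.Ioo (0:ℝ) 1 ∧ betaCDF ξ₁ ξ₂₁ (G₁ ω) = ω)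
    (hG₂ : ∀ ω ∈ Set.Ioo (0:ℝ) 1, G₂ ω ∈ Set.Ioo (0:ℝ) 1 ∧ betaCDF ξ₁ ξ₂₂ (G₂ ω) = ω) :
    (¬ ∃ C : ℝ, ∀ ω ∈ Set.Ioo (0:ℝ) 1, G₂ ω / G₁ ω = C) ∧
    ∃ ω₁ ω₂ : ℝ, 0 < ω₁ ∧ ω₁ < ω₂ ∧ ω₂ < 1 ∧
      StrictMonoOn (fun ω => G₂ ω / G₁ ω) (Set.Ioo ω₁ ω₂) := by
  have hb₁ : (1:ℝ) ≤ ξ₂₁ := h1.le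
  have hb₂ : (1:ℝ) ≤ ξ₂₂ := by linarith
  have hb₁0 : (0:ℝ) < ξ₂₁ := by linarith
  have hb₂0 : (0:ℝ) < ξ₂₂ := by linarith
  -- G₂ < G₁ pointwise
  have hGlt : ∀ ω ∈ Set.Ioo (0:ℝ) 1, G₂ ω < G₁ ω := by
    intro ω hω
    obtain ⟨hx₁, hF₁⟩ := hG₁ ω hω
    obtain ⟨hx₂, hF₂⟩ := hG₂ ω hω
    by_contra hcon
    push_neg at hcon
    have hle := betaCDF_le (b := ξ₂₁) hξ₁ hb₁ hx₁.1.le hcon hx₂.2.le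
    have hdom := betaCDF_dominance hξ₁ hb₁ h2 hx₂
    rw [hF₁] at hle
    rw [hF₂] at hdom
    linarith
  set Φ : ℝ → ℝ := fun ω =>
    (dens ξ₁ ξ₂₂ (G₂ ω))⁻¹ * G₁ ω - G₂ ω * (dens ξ₁ ξ₂₁ (G₁ ω))⁻¹ with hΦdef
  have hderiv : ∀ ω ∈ Set.Ioo (0:ℝ) 1,
      HasDerivAt (fun ω => G₂ ω / G₁ ω) (Φ ω / G₁ ω ^ 2) ω := by
    intro ω hω
    exact ((G_hasStrictDerivAt hG₂ hξ₁ hb₂ hω).hasDerivAt).div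
      ((G_hasStrictDerivAt hG₁ hξ₁ hb₁ hω).hasDerivAt) (hG₁ ω hω).1.1.ne'
  have hcontOn : ∀ s : Set ℝ, s ⊆ Set.Ioo (0:ℝ) 1 →
      ContinuousOn (fun ω => G₂ ω / G₁ ω) s := fun s hs x hx =>
    ((hderiv x (hs hx)).differentiableAt.continuousAt).continuousWithinAt
  by_cases hcase : ∃ ω ∈ Set.Ioo (0:ℝ) 1, 0 < Φ ω
  · obtain ⟨ω₀, hω₀, hΦpos⟩ := hcase
    obtain ⟨hx₁, hF₁⟩ := hG₁ ω₀ hω₀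
    obtain ⟨hx₂, hF₂⟩ := hG₂ ω₀ hω₀
    have hΦcont : ContinuousAt Φ ω₀ := by
      have hc₁ : ContinuousAt G₁ ω₀ := G_continuousAt hG₁ hξ₁ hb₁ hω₀
      have hc₂ : ContinuousAt G₂ ω₀ := G_continuousAt hG₂ hξ₁ hb₂ hω₀
      exact ((((dens_continuousAt hx₂).comp hc₂).inv₀
          (dens_pos hξ₁ hb₂0 hx₂).ne').mul hc₁).sub
        (hc₂.mul (((dens_continuousAt hx₁).comp hc₁).inv₀ (dens_pos hξ₁ hb₁0 hx₁).ne'))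
    have hev : ∀ᶠ x in nhds ω₀, 0 < Φ x ∧ x ∈ Set.Ioo (0:ℝ) 1 :=
      (hΦcont.eventually (eventually_gt_nhds hΦpos)).and
        (Ioo_mem_nhds hω₀.1 hω₀.2)
    obtain ⟨δ, hδpos, hδ⟩ := Metric.eventually_nhds_iff.mp hev
    set ω₁ := max (ω₀ - δ/2) (ω₀/2) with hω₁def
    set ω₂ := min (ω₀ + δ/2) ((ω₀+1)/2) with hω₂def
    have hω₁pos : 0 < ω₁ := lt_max_of_lt_right (by linarith [hω₀.1])
    have hω₁lt : ω₁ < ω₀ := max_lt (by linarith) (by linarith [hω₀.1])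
    have hω₂gt : ω₀ < ω₂ := lt_min (by linarith) (by linarith [hω₀.2])
    have hω₂lt1 : ω₂ < 1 := min_lt_of_right_lt (by linarith [hω₀.2])
    have hsub : Set.Ioo ω₁ ω₂ ⊆ Set.Ioo (0:ℝ) 1 := by
      intro x hx
      have h₁ : ω₀ - δ/2 < x := lt_of_le_of_lt (le_max_left _ _) hx.1
      have h₂ : x < ω₀ + δ/2 := lt_of_lt_of_le hx.2 (min_le_left _ _)
      exact (hδ (by rw [Real.dist_eq, abs_lt]; constructor <;> linarith)).2
    have hΦIoo : ∀ x ∈ Set.Ioo ω₁ ω₂, 0 < Φ x := by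
      intro x hx
      have h₁ : ω₀ - δ/2 < x := lt_of_le_of_lt (le_max_left _ _) hx.1
      have h₂ : x < ω₀ + δ/2 := lt_of_lt_of_le hx.2 (min_le_left _ _)
      exact (hδ (by rw [Real.dist_eq, abs_lt]; constructor <;> linarith)).1
    have hsm : StrictMonoOn (fun ω => G₂ ω / G₁ ω) (Set.Ioo ω₁ ω₂) := by
      apply strictMonoOn_of_deriv_pos (convex_Ioo ω₁ ω₂) (hcontOn _ hsub)
      intro x hx
      rw [interior_Ioo] at hx
      rw [(hderiv x (hsub hx)).deriv]
      exact div_pos (hΦIoo x hx) (pow_pos (hG₁ x (hsub hx)).1.1 2)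
    constructor
    · rintro ⟨C, hC⟩
      set u := ω₁ + (ω₂ - ω₁)/3 with hu
      set v := ω₂ - (ω₂ - ω₁)/3 with hv
      have h12 : ω₁ < ω₂ := hω₁lt.trans hω₂gt
      have hum : u ∈ Set.Ioo ω₁ ω₂ := ⟨by simp only [hu]; linarith, by simp only [hu]; linarith⟩
      have hvm : v ∈ Set.Ioo ω₁ ω₂ := ⟨by simp only [hv]; linarith, by simp only [hv]; linarith⟩
      have huv : u < v := by simp only [hu, hv]; linarith
      have := hsm hum hvm huv
      simp only at this
      rw [hC u (hsub hum), hC v (hsub hvm)] at this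
      exact lt_irrefl _ this
    · exact ⟨ω₁, ω₂, hω₁pos, hω₁lt.trans hω₂gt, hω₂lt1, hsm⟩
  · exfalso
    push_neg at hcase
    have hanti : AntitoneOn (fun ω => G₂ ω / G₁ ω) (Set.Ioo (0:ℝ) 1) := by
      apply antitoneOn_of_deriv_nonpos (convex_Ioo 0 1) (hcontOn _ (subset_refl _))
      · rw [interior_Ioo]
        exact fun x hx => (hderiv x hx).differentiableAt.differentiableWithinAt
      · rw [interior_Ioo]
        intro x hx
        rw [(hderiv x hx).deriv]
        exact div_nonpos_of_nonpos_of_nonneg (hcase x hx) (sq_nonneg _)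
    set ω₀ : ℝ := 1/2 with hω₀def
    have hω₀ : ω₀ ∈ Set.Ioo (0:ℝ) 1 := by constructor <;> norm_num
    obtain ⟨hx₁, hF₁⟩ := hG₁ ω₀ hω₀
    obtain ⟨hx₂, hF₂⟩ := hG₂ ω₀ hω₀
    set r := G₂ ω₀ / G₁ ω₀ with hrdef
    have hr0 : 0 < r := div_pos hx₂.1 hx₁.1
    have hr1 : r < 1 := (div_lt_one hx₁.1).mpr (hGlt ω₀ hω₀)
    set q : ℝ := (r+1)/2 with hqdef
    have hq : q ∈ Set.Ioo (0:ℝ) 1 := ⟨by linarith, by linarith⟩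
    have hFq₁ : betaCDF ξ₁ ξ₂₁ q < 1 := by
      have := betaCDF_lt hξ₁ hb₁ hq.1.le hq.2 le_rfl
      rwa [betaCDF_one hξ₁ hb₁] at this
    have hFq₂ : betaCDF ξ₁ ξ₂₂ q < 1 := by
      have := betaCDF_lt hξ₁ hb₂ hq.1.le hq.2 le_rfl
      rwa [betaCDF_one hξ₁ hb₂] at this
    set m := max (max (betaCDF ξ₁ ξ₂₁ q) (betaCDF ξ₁ ξ₂₂ q)) (1/2) with hmdef
    have hm1 : m < 1 := max_lt (max_lt hFq₁ hFq₂) (by norm_num)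
    have hmge : (1:ℝ)/2 ≤ m := le_max_right _ _
    set ω : ℝ := (m+1)/2 with hωdef
    have hωm : ω ∈ Set.Ioo (0:ℝ) 1 := ⟨by linarith, by linarith⟩
    have hωge : ω₀ ≤ ω := by simp only [hωdef, hω₀def]; linarith
    have hG₂gt : q < G₂ ω := by
      apply G_gt_of hG₂ hξ₁ hb₂ hωm hq.1.le hq.2.le
      calc betaCDF ξ₁ ξ₂₂ q ≤ m := le_trans (le_max_right _ _) (le_max_left _ _)
        _ < ω := by simp only [hωdef]; linarith
    obtain ⟨hy₁, _⟩ := hG₁ ω hωm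
    have happ := hanti hω₀ hωm hωge
    have hgt : q < G₂ ω / G₁ ω := by
      rw [lt_div_iff₀ hy₁.1]
      nlinarith [hy₁.2, hq.1]
    simp only at happ
    rw [← hrdef] at happ
    linarith
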